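/- The Schur index of the A₂ Argyres–Douglas theory, given by I = (q²;q²)_∞² Σ_{l₁,l₂≥0} q^{2l₁+2l₂+2l₁l₂} / ((q²;q²)_{l₁}² (q²;q²)_{l₂}²), equals the specialized generating series of the four-node symmetric quiver with adjacency matrix [[0,1,1,0],[1,0,0,1],[1,0,1,0],[0,1,0,1]]: I = Σ_{l₁,l₂,m,n≥0} (-q)^{m²+n²+2ml₁+2nl₂+2l₁l₂} q^{2l₁+2l₂+m+n} / ((q²;q²)_{l₁}(q²;q²)_{l₂}(q²;q²)_m(q²;q²)_n). -/

import Mathlib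

open scoped BigOperators

/-- The finite q-Pochhammer symbol `(q²;q²)_k = ∏_{j=1}^{k} (1 - q^{2j})`. -/
noncomputable def qfac (q : ℂ) (d : ℕ) : ℂ := ∏ k ∈ Finset.range d, (1 - q ^ (2 * k + 2))

namespace SchurA2

open Finset Filter Complex Topology

variable {q x : ℂ}

lemma norm_q_pow_lt (hq : ‖q‖ < 1) {a : ℕ} (ha : a ≠ 0) : ‖q ^ a‖ < 1 := by
  rw [norm_pow]
  exact pow_lt_one₀ (norm_nonneg q) hq ha

lemma norm_q_pow_le (hq : ‖q‖ < 1) (a : ℕ) : ‖q ^ a‖ ≤ 1 := by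
  rw [norm_pow]
  exact pow_le_one₀ (norm_nonneg q) hq.le

lemma one_sub_q_pow_ne (hq : ‖q‖ < 1) {a : ℕ} (ha : a ≠ 0) : (1 : ℂ) - q ^ a ≠ 0 := by
  intro h
  have h1 : q ^ a = 1 := by linear_combination -h
  have h2 := norm_q_pow_lt hq ha
  rw [h1] at h2
  simp at h2

lemma qfac_ne_zero (hq : ‖q‖ < 1) (d : ℕ) : qfac q d ≠ 0 :=
  Finset.prod_ne_zero_iff.2 fun k _ => one_sub_q_pow_ne hq (by omega)

lemma qfac_succ (d : ℕ) : qfac q (d + 1) = qfac q d * (1 - q ^ (2 * d + 2)) :=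
  Finset.prod_range_succ _ _

lemma qfac_add (m k : ℕ) :
    qfac q (m + k) = qfac q m * ∏ j ∈ Finset.range k, (1 - q ^ (2 * (m + j) + 2)) := by
  rw [qfac, Finset.prod_range_add]
  rfl

lemma norm_one_sub_q_pow_le (hq : ‖q‖ < 1) (a : ℕ) : ‖(1 : ℂ) - q ^ a‖ ≤ 2 := by
  calc ‖(1 : ℂ) - q ^ a‖ ≤ ‖(1 : ℂ)‖ + ‖q ^ a‖ := norm_sub_le _ _
    _ ≤ 1 + 1 := by
        refine add_le_add (by simp) (norm_q_pow_le hq a)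
    _ = 2 := by norm_num

lemma one_sub_norm_le (hq : ‖q‖ < 1) {a : ℕ} (ha : a ≠ 0) :
    1 - ‖q‖ ≤ ‖(1 : ℂ) - q ^ a‖ := by
  have h1 : ‖q ^ a‖ ≤ ‖q‖ := by
    rw [norm_pow]
    calc ‖q‖ ^ a ≤ ‖q‖ ^ 1 := pow_le_pow_of_le_one (norm_nonneg q) hq.le (by omega)
      _ = ‖q‖ := pow_one _
  calc 1 - ‖q‖ ≤ 1 - ‖q ^ a‖ := by linarith
    _ = ‖(1:ℂ)‖ - ‖q ^ a‖ := by simp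
    _ ≤ ‖(1 : ℂ) - q ^ a‖ := norm_sub_norm_le _ _

lemma norm_qfac_lower (hq : ‖q‖ < 1) (d : ℕ) : (1 - ‖q‖) ^ d ≤ ‖qfac q d‖ := by
  rw [qfac, norm_prod]
  calc (1 - ‖q‖) ^ d = ∏ _k ∈ Finset.range d, (1 - ‖q‖) := by
        rw [Finset.prod_const, Finset.card_range]
    _ ≤ ∏ k ∈ Finset.range d, ‖(1 : ℂ) - q ^ (2 * k + 2)‖ := by
        refine Finset.prod_le_prod (fun k _ => by linarith) (fun k _ => one_sub_norm_le hq (by omega))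

lemma norm_prod_one_sub_le (hq : ‖q‖ < 1) (s : ℕ) (g : ℕ → ℕ) :
    ‖∏ j ∈ Finset.range s, ((1 : ℂ) - q ^ (g j))‖ ≤ 2 ^ s := by
  rw [norm_prod]
  calc ∏ j ∈ Finset.range s, ‖(1 : ℂ) - q ^ (g j)‖ ≤ ∏ _j ∈ Finset.range s, (2:ℝ) :=
        Finset.prod_le_prod (fun j _ => norm_nonneg _) (fun j _ => norm_one_sub_q_pow_le hq _)
    _ = 2 ^ s := by rw [Finset.prod_const, Finset.card_range]

noncomputable def gb (q : ℂ) (N k : ℕ) : ℂ :=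
  if k ≤ N then qfac q N / (qfac q k * qfac q (N - k)) else 0

lemma gb_of_gt {N k : ℕ} (h : N < k) : gb q N k = 0 := if_neg (by omega)

lemma gb_zero (hq : ‖q‖ < 1) (N : ℕ) : gb q N 0 = 1 := by
  rw [gb, if_pos (Nat.zero_le N)]
  have h0 : qfac q 0 = 1 := Finset.prod_range_zero _
  rw [h0, Nat.sub_zero, one_mul, div_self (qfac_ne_zero hq N)]

lemma gb_self (hq : ‖q‖ < 1) (N : ℕ) : gb q N N = 1 := by
  rw [gb, if_pos le_rfl, Nat.sub_self]
  have h0 : qfac q 0 = 1 := Finset.prod_range_zero _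
  rw [h0, mul_one, div_self (qfac_ne_zero hq N)]

lemma gb_succ_succ (hq : ‖q‖ < 1) (N k : ℕ) :
    gb q (N + 1) (k + 1) = gb q N (k + 1) + q ^ (2 * (N - k)) * gb q N k := by
  rcases lt_or_ge N k with h | h
  · rw [gb_of_gt (by omega), gb_of_gt (by omega), gb_of_gt h]
    ring
  rcases eq_or_lt_of_le h with rfl | h2
  · rw [gb_self hq, gb_of_gt (Nat.lt_succ_self _), gb_self hq, Nat.sub_self]
    ring
  · obtain ⟨m, rfl⟩ : ∃ m, N = k + (m + 1) := ⟨N - k - 1, by omega⟩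
    rw [gb, if_pos (by omega), gb, if_pos (by omega), gb, if_pos (by omega)]
    rw [show k + (m + 1) + 1 - (k + 1) = m + 1 by omega,
        show k + (m + 1) - (k + 1) = m by omega,
        show k + (m + 1) - k = m + 1 by omega]
    rw [qfac_succ (k + (m+1)), qfac_succ m, qfac_succ k]
    have hA := qfac_ne_zero hq (k + (m + 1))
    have hB := qfac_ne_zero hq k
    have hC := qfac_ne_zero hq m
    have h1 : (1 : ℂ) - q ^ (2 * k + 2) ≠ 0 := one_sub_q_pow_ne hq (by omega)
    have h2 : (1 : ℂ) - q ^ (2 * m + 2) ≠ 0 := one_sub_q_pow_ne hq (by omega)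
    field_simp
    ring

noncomputable def aco (q : ℂ) (N k : ℕ) : ℂ := (-1) ^ k * q ^ (k * (k - 1)) * gb q N k

lemma aco_zero (hq : ‖q‖ < 1) (N : ℕ) : aco q N 0 = 1 := by
  simp [aco, gb_zero hq]

lemma aco_top (N : ℕ) : aco q N (N + 1) = 0 := by
  simp [aco, gb_of_gt (Nat.lt_succ_self N)]

lemma aco_step (hq : ‖q‖ < 1) {N k : ℕ} (hk : k ≤ N) :
    aco q (N + 1) (k + 1) = aco q N (k + 1) - q ^ (2 * N) * aco q N k := by
  unfold aco
  rw [gb_succ_succ hq]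
  obtain ⟨m, rfl⟩ := Nat.exists_eq_add_of_le hk
  rw [show k + m - k = m by omega]
  cases k with
  | zero => simp; ring
  | succ n =>
    rw [show n + 1 + 1 - 1 = n + 1 by omega, show n + 1 - 1 = n by omega]
    ring

lemma finite_euler (hq : ‖q‖ < 1) (N : ℕ) (x : ℂ) :
    ∏ j ∈ Finset.range N, (1 - x * q ^ (2 * j)) =
      ∑ k ∈ Finset.range (N + 1), aco q N k * x ^ k := by
  induction N with
  | zero => simp [aco_zero hq]
  | succ N IH =>
    calc ∏ j ∈ Finset.range (N + 1), (1 - x * q ^ (2 * j))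
        = (∑ k ∈ Finset.range (N + 1), aco q N k * x ^ k) * (1 - x * q ^ (2 * N)) := by
          rw [Finset.prod_range_succ, IH]
      _ = (aco q N 0 * x ^ 0 + ∑ k ∈ Finset.range (N + 1), aco q N (k + 1) * x ^ (k + 1))
            - ∑ k ∈ Finset.range (N + 1), q ^ (2 * N) * aco q N k * x ^ (k + 1) := by
          have h1 : ∑ k ∈ Finset.range (N + 1), aco q N k * x ^ k
              = aco q N 0 * x ^ 0 + ∑ k ∈ Finset.range (N + 1), aco q N (k + 1) * x ^ (k + 1) := by
            rw [Finset.sum_range_succ (fun k => aco q N (k + 1) * x ^ (k + 1)) N, aco_top,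
              Finset.sum_range_succ' (fun k => aco q N k * x ^ k) N]
            ring
          have h2 : (∑ k ∈ Finset.range (N + 1), aco q N k * x ^ k) * (x * q ^ (2 * N))
              = ∑ k ∈ Finset.range (N + 1), q ^ (2 * N) * aco q N k * x ^ (k + 1) := by
            rw [Finset.sum_mul]
            exact Finset.sum_congr rfl fun k _ => by ring
          rw [mul_sub, mul_one, h2, h1]
      _ = aco q (N + 1) 0 * x ^ 0 +
            ∑ k ∈ Finset.range (N + 1), aco q (N + 1) (k + 1) * x ^ (k + 1) := by
          rw [add_sub_assoc, ← Finset.sum_sub_distrib]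
          rw [aco_zero hq, aco_zero hq]
          congr 1
          refine Finset.sum_congr rfl fun k hk => ?_
          rw [aco_step hq (Nat.lt_succ_iff.mp (Finset.mem_range.mp hk))]
          ring
      _ = ∑ k ∈ Finset.range (N + 2), aco q (N + 1) k * x ^ k := by
          rw [Finset.sum_range_succ' (fun k => aco q (N + 1) k * x ^ k) (N + 1)]
          ring

lemma summable_pow_mul (hq : ‖q‖ < 1) {C : ℝ} (hC : 0 ≤ C) :
    Summable (fun k : ℕ => C ^ k * ‖q‖ ^ (k * (k - 1))) := by
  apply summable_of_ratio_norm_eventually_le (r := 1/2) (by norm_num)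
  have hq2 : ‖q‖ ^ 2 < 1 := pow_lt_one₀ (norm_nonneg q) hq two_ne_zero
  have ht : Tendsto (fun k : ℕ => C * (‖q‖ ^ 2) ^ k) atTop (𝓝 (C * 0)) :=
    tendsto_const_nhds.mul (tendsto_pow_atTop_nhds_zero_of_lt_one (by positivity) hq2)
  rw [mul_zero] at ht
  filter_upwards [ht.eventually_le_const (by norm_num : (0:ℝ) < 1/2)] with k hk
  have key : (k + 1) * ((k + 1) - 1) = 2 * k + k * (k - 1) := by
    cases k with
    | zero => rfl
    | succ n => simp [Nat.add_sub_cancel]; ring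
  have h1 : C ^ (k + 1) * ‖q‖ ^ ((k + 1) * ((k + 1) - 1))
      = (C * (‖q‖ ^ 2) ^ k) * (C ^ k * ‖q‖ ^ (k * (k - 1))) := by
    rw [key, pow_add, ← pow_mul]
    ring
  rw [Real.norm_of_nonneg (by positivity), Real.norm_of_nonneg (by positivity), h1]
  exact mul_le_mul_of_nonneg_right hk (by positivity)

lemma euler_ne (hq : ‖q‖ < 1) (hx : ‖x‖ < 1) (j : ℕ) : (1 : ℂ) - x * q ^ (2 * j) ≠ 0 := by
  intro h
  have h1 : x * q ^ (2 * j) = 1 := by linear_combination -h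
  have h2 : ‖x * q ^ (2 * j)‖ < 1 := by
    rw [norm_mul, norm_pow]
    calc ‖x‖ * ‖q‖ ^ (2 * j) ≤ ‖x‖ * 1 :=
          mul_le_mul_of_nonneg_left (pow_le_one₀ (norm_nonneg q) hq.le) (norm_nonneg x)
      _ = ‖x‖ := mul_one _
      _ < 1 := hx
  rw [h1] at h2
  simp at h2

lemma norm_xq (j : ℕ) : ‖x * q ^ (2 * j)‖ = ‖x‖ * (‖q‖ ^ 2) ^ j := by
  rw [norm_mul, norm_pow, ← pow_mul, mul_comm 2 j, pow_mul]

lemma euler_multipliable (hq : ‖q‖ < 1) (hx : ‖x‖ < 1) :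
    Multipliable (fun j : ℕ => (1 : ℂ) - x * q ^ (2 * j)) := by
  have hq2 : ‖q‖ ^ 2 < 1 := pow_lt_one₀ (norm_nonneg q) hq two_ne_zero
  have hlog : Summable (fun j : ℕ => Complex.log (1 - x * q ^ (2 * j))) := by
    have hb : Summable (fun j : ℕ => (‖x‖ * (‖q‖ ^ 2) ^ j) * ((1 - ‖x‖)⁻¹ / 2 + 1)) :=
      (((summable_geometric_of_lt_one (by positivity) hq2).mul_left ‖x‖).mul_right _)
    apply Summable.of_norm_bounded hb
    intro j
    have hw : ‖x‖ * (‖q‖ ^ 2) ^ j ≤ ‖x‖ := by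
      calc ‖x‖ * (‖q‖ ^ 2) ^ j ≤ ‖x‖ * 1 :=
            mul_le_mul_of_nonneg_left (pow_le_one₀ (by positivity) hq2.le) (norm_nonneg x)
        _ = ‖x‖ := mul_one _
    have hzn : ‖-(x * q ^ (2 * j))‖ = ‖x‖ * (‖q‖ ^ 2) ^ j := by rw [norm_neg, norm_xq]
    have hlt : ‖-(x * q ^ (2 * j))‖ < 1 := by rw [hzn]; linarith
    have hbd := Complex.norm_log_one_add_le hlt
    rw [show (1 : ℂ) + -(x * q ^ (2 * j)) = 1 - x * q ^ (2 * j) by ring] at hbd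
    refine hbd.trans ?_
    rw [hzn]
    set w := ‖x‖ * (‖q‖ ^ 2) ^ j with hwdef
    have hw0 : 0 ≤ w := by positivity
    have hw1 : w < 1 := lt_of_le_of_lt hw hx
    have hinv : (1 - w)⁻¹ ≤ (1 - ‖x‖)⁻¹ := by
      apply inv_anti₀ (by linarith) (by linarith)
    have hsq : w ^ 2 ≤ w := by nlinarith
    have h3 : w ^ 2 * (1 - w)⁻¹ ≤ w * (1 - ‖x‖)⁻¹ := by
      apply mul_le_mul hsq hinv (inv_nonneg.mpr (by linarith)) hw0
    nlinarith
  exact Complex.multipliable_of_summable_log hlog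

noncomputable def G (q x : ℂ) (k : ℕ) : ℂ := (-1) ^ k * q ^ (k * (k - 1)) * x ^ k / qfac q k

lemma gb_prod (hq : ‖q‖ < 1) {N k : ℕ} (h : k ≤ N) :
    gb q N k = (∏ j ∈ Finset.range k, (1 - q ^ (2 * ((N - k) + j) + 2))) / qfac q k := by
  obtain ⟨m, rfl⟩ := Nat.exists_eq_add_of_le h
  rw [gb, if_pos h, show k + m - k = m by omega, show k + m = m + k by omega, qfac_add m k]
  have hm := qfac_ne_zero hq m
  have hk := qfac_ne_zero hq k
  field_simp

lemma aco_norm_bound (hq : ‖q‖ < 1) (hx : ‖x‖ < 1) (N k : ℕ) :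
    ‖aco q N k * x ^ k‖ ≤ (2 * ‖x‖ / (1 - ‖q‖)) ^ k * ‖q‖ ^ (k * (k - 1)) := by
  have hr1 : (0:ℝ) < 1 - ‖q‖ := by linarith
  rcases le_or_gt k N with h | h
  · rw [aco, gb_prod hq h]
    have hnorm : ‖(-1 : ℂ) ^ k * q ^ (k * (k - 1)) *
        ((∏ j ∈ Finset.range k, (1 - q ^ (2 * ((N - k) + j) + 2))) / qfac q k) * x ^ k‖
        = ‖q‖ ^ (k * (k - 1)) *
          (‖∏ j ∈ Finset.range k, ((1:ℂ) - q ^ (2 * ((N - k) + j) + 2))‖ / ‖qfac q k‖) *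
          ‖x‖ ^ k := by
      rw [norm_mul, norm_mul, norm_mul, norm_div, norm_pow, norm_pow, norm_pow, norm_neg,
        norm_one, one_pow, one_mul]
    rw [hnorm]
    have hp : ‖∏ j ∈ Finset.range k, ((1:ℂ) - q ^ (2 * ((N - k) + j) + 2))‖ ≤ 2 ^ k :=
      norm_prod_one_sub_le hq k _
    have hl : (1 - ‖q‖) ^ k ≤ ‖qfac q k‖ := norm_qfac_lower hq k
    have hdiv : ‖∏ j ∈ Finset.range k, ((1:ℂ) - q ^ (2 * ((N - k) + j) + 2))‖ / ‖qfac q k‖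
        ≤ 2 ^ k / (1 - ‖q‖) ^ k :=
      div_le_div₀ (by positivity) hp (by positivity) hl
    calc ‖q‖ ^ (k * (k - 1)) *
          (‖∏ j ∈ Finset.range k, ((1:ℂ) - q ^ (2 * ((N - k) + j) + 2))‖ / ‖qfac q k‖) * ‖x‖ ^ k
        ≤ ‖q‖ ^ (k * (k - 1)) * (2 ^ k / (1 - ‖q‖) ^ k) * ‖x‖ ^ k := by
          apply mul_le_mul_of_nonneg_right (mul_le_mul_of_nonneg_left hdiv (by positivity))
            (by positivity)
      _ = (2 * ‖x‖ / (1 - ‖q‖)) ^ k * ‖q‖ ^ (k * (k - 1)) := by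
          rw [div_pow, mul_pow]
          ring
  · rw [aco, gb_of_gt h]
    simp only [mul_zero, zero_mul, norm_zero]
    positivity

lemma euler_tprod (hq : ‖q‖ < 1) (hx : ‖x‖ < 1) :
    ∏' j : ℕ, ((1 : ℂ) - x * q ^ (2 * j)) = ∑' k : ℕ, G q x k := by
  have hr1 : (0:ℝ) < 1 - ‖q‖ := by linarith
  have hmul := euler_multipliable hq hx
  have hlim1 : Tendsto (fun N => ∏ j ∈ Finset.range N, ((1:ℂ) - x * q ^ (2 * j))) atTop
      (𝓝 (∏' j : ℕ, ((1 : ℂ) - x * q ^ (2 * j)))) := hmul.hasProd.tendsto_prod_nat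
  have heq : ∀ N, ∏ j ∈ Finset.range N, ((1:ℂ) - x * q ^ (2 * j))
      = ∑' k : ℕ, aco q N k * x ^ k := by
    intro N
    rw [finite_euler hq N x]
    refine (tsum_eq_sum (s := Finset.range (N + 1)) ?_).symm
    intro k hk
    simp [aco, gb_of_gt (show N < k by simpa using hk)]
  have hlim2 : Tendsto (fun N => ∑' k : ℕ, aco q N k * x ^ k) atTop (𝓝 (∑' k : ℕ, G q x k)) := by
    apply tendsto_tsum_of_dominated_convergence
      (bound := fun k => (2 * ‖x‖ / (1 - ‖q‖)) ^ k * ‖q‖ ^ (k * (k - 1)))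
    · exact summable_pow_mul hq (by positivity)
    · intro k
      have hconst : Tendsto (fun N : ℕ => ∏ j ∈ Finset.range k, ((1:ℂ) - q ^ (2 * ((N - k) + j) + 2)))
          atTop (𝓝 1) := by
        have h1 : Tendsto (fun N : ℕ => ∏ j ∈ Finset.range k, ((1:ℂ) - q ^ (2 * ((N - k) + j) + 2)))
            atTop (𝓝 (∏ _j ∈ Finset.range k, (1:ℂ))) := by
          apply tendsto_finset_prod
          intro j _
          have hpow : Tendsto (fun a : ℕ => q ^ a) atTop (𝓝 0) :=
            tendsto_pow_atTop_nhds_zero_of_norm_lt_one hq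
          have hexp : Tendsto (fun N : ℕ => 2 * ((N - k) + j) + 2) atTop atTop := by
            apply tendsto_atTop_atTop.mpr
            intro b
            exact ⟨b + k, fun a ha => by omega⟩
          have h2 := hpow.comp hexp
          have h3 : Tendsto (fun N : ℕ => (1:ℂ) - q ^ (2 * ((N - k) + j) + 2)) atTop (𝓝 (1 - 0)) :=
            tendsto_const_nhds.sub h2
          simpa using h3
        simpa using h1
      have hev : (fun N => aco q N k * x ^ k) =ᶠ[atTop]
          (fun N => ((-1:ℂ) ^ k * q ^ (k * (k - 1)) * x ^ k * (qfac q k)⁻¹) *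
            (∏ j ∈ Finset.range k, ((1:ℂ) - q ^ (2 * ((N - k) + j) + 2)))) := by
        filter_upwards [eventually_ge_atTop k] with N hN
        rw [aco, gb_prod hq hN, div_eq_mul_inv]
        ring
      have hmain : Tendsto (fun N : ℕ => ((-1:ℂ) ^ k * q ^ (k * (k - 1)) * x ^ k * (qfac q k)⁻¹) *
            (∏ j ∈ Finset.range k, ((1:ℂ) - q ^ (2 * ((N - k) + j) + 2)))) atTop
          (𝓝 (G q x k)) := by
        have := tendsto_const_nhds.mul hconst
          (a := (-1:ℂ) ^ k * q ^ (k * (k - 1)) * x ^ k * (qfac q k)⁻¹)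
        rw [mul_one] at this
        convert this using 2
        rw [G, div_eq_mul_inv]
      exact hmain.congr' hev.symm
    · exact Eventually.of_forall fun N k => aco_norm_bound hq hx N k
  rw [funext heq] at hlim1
  exact tendsto_nhds_unique hlim1 hlim2

lemma prod_one_sub_ge {a : ℕ → ℝ} (h0 : ∀ j, 0 ≤ a j) (h1 : ∀ j, a j ≤ 1) (n : ℕ) :
    1 - ∑ j ∈ Finset.range n, a j ≤ ∏ j ∈ Finset.range n, (1 - a j) := by
  induction n with
  | zero => simp
  | succ n ih =>
    rw [Finset.sum_range_succ, Finset.prod_range_succ]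
    have hP : 0 ≤ ∏ j ∈ Finset.range n, (1 - a j) :=
      Finset.prod_nonneg fun j _ => by linarith [h1 j]
    have hS : 0 ≤ ∑ j ∈ Finset.range n, a j := Finset.sum_nonneg fun j _ => h0 j
    nlinarith [h0 n, h1 n, mul_le_mul_of_nonneg_right ih (by linarith [h1 n] : (0:ℝ) ≤ 1 - a n),
      mul_nonneg hS (h0 n)]

lemma exists_qfac_lb (hq : ‖q‖ < 1) : ∃ c : ℝ, 0 < c ∧ ∀ d, c ≤ ‖qfac q d‖ := by
  set r := ‖q‖ with hr
  have hr0 : 0 ≤ r := norm_nonneg q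
  have hr2 : r ^ 2 < 1 := pow_lt_one₀ hr0 hq two_ne_zero
  have ha : Summable (fun j : ℕ => r ^ (2 * j + 2)) := by
    have hfun : (fun j : ℕ => r ^ (2 * j + 2)) = fun j => r ^ 2 * (r ^ 2) ^ j := by
      funext j
      rw [← pow_mul, ← pow_add]
      ring_nf
    rw [hfun]
    exact (summable_geometric_of_lt_one (by positivity) hr2).mul_left _
  obtain ⟨J, hJ⟩ : ∃ J : ℕ, ∑' j : ℕ, r ^ (2 * (j + J) + 2) ≤ 1/2 := by
    have htail := tendsto_sum_nat_add (f := fun j : ℕ => r ^ (2 * j + 2))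
    exact (htail.eventually_le_const (by norm_num : (0:ℝ) < 1/2)).exists
  have hqJpos : 0 < ‖qfac q J‖ := norm_pos_iff.mpr (qfac_ne_zero hq J)
  have h2Jpos : (0:ℝ) < 2 ^ J := by positivity
  refine ⟨‖qfac q J‖ / 2 ^ J * (1/2), by positivity, ?_⟩
  intro d
  rcases le_or_gt d J with h | h
  · obtain ⟨s, rfl⟩ := Nat.exists_eq_add_of_le h
    rw [qfac_add d s, norm_mul]
    have hb : ‖∏ j ∈ Finset.range s, ((1:ℂ) - q ^ (2 * (d + j) + 2))‖ ≤ 2 ^ s :=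
      norm_prod_one_sub_le hq s _
    have hdq : 0 < ‖qfac q d‖ := norm_pos_iff.mpr (qfac_ne_zero hq d)
    have h2s : (2:ℝ) ^ s ≤ 2 ^ (d + s) := by
      apply pow_le_pow_right₀ (by norm_num) (by omega)
    calc ‖qfac q d‖ * ‖∏ j ∈ Finset.range s, ((1:ℂ) - q ^ (2 * (d + j) + 2))‖ / 2 ^ (d+s) * (1/2)
        ≤ ‖qfac q d‖ * 2 ^ (d+s) / 2 ^ (d+s) * (1/2) := by
          have : ‖∏ j ∈ Finset.range s, ((1:ℂ) - q ^ (2 * (d + j) + 2))‖ ≤ 2 ^ (d+s) :=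
            hb.trans h2s
          gcongr
      _ = ‖qfac q d‖ * (1/2) := by
          field_simp
      _ ≤ ‖qfac q d‖ := by linarith
  · obtain ⟨s, rfl⟩ := Nat.exists_eq_add_of_le h.le
    rw [qfac_add J s, norm_mul]
    have hbound : 1/2 ≤ ‖∏ j ∈ Finset.range s, ((1:ℂ) - q ^ (2 * (J + j) + 2))‖ := by
      have hnn : ∀ j : ℕ, 0 ≤ r ^ (2 * (J + j) + 2) := fun j => by positivity
      have hle1 : ∀ j : ℕ, r ^ (2 * (J + j) + 2) ≤ 1 := fun j => pow_le_one₀ hr0 hq.le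
      have hfinsum : ∑ j ∈ Finset.range s, r ^ (2 * (J + j) + 2) ≤ 1/2 := by
        refine le_trans ?_ hJ
        have hsum : Summable (fun j : ℕ => r ^ (2 * (j + J) + 2)) := by
          have := (summable_nat_add_iff J).mpr ha
          simpa using this
        have := hsum.sum_le_tsum (Finset.range s) (fun j _ => by positivity)
        refine le_trans (le_of_eq ?_) this
        exact Finset.sum_congr rfl fun j _ => by rw [Nat.add_comm J j]
      calc (1:ℝ)/2 ≤ 1 - ∑ j ∈ Finset.range s, r ^ (2 * (J + j) + 2) := by linarith
        _ ≤ ∏ j ∈ Finset.range s, (1 - r ^ (2 * (J + j) + 2)) :=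
            prod_one_sub_ge (fun j => hnn j) (fun j => hle1 j) s
        _ ≤ ‖∏ j ∈ Finset.range s, ((1:ℂ) - q ^ (2 * (J + j) + 2))‖ := by
            rw [norm_prod]
            refine Finset.prod_le_prod (fun j _ => by linarith [hle1 j]) ?_
            intro j _
            have hnp : ‖q ^ (2 * (J + j) + 2)‖ = r ^ (2 * (J + j) + 2) := by rw [norm_pow]
            calc 1 - r ^ (2 * (J + j) + 2) = ‖(1:ℂ)‖ - ‖q ^ (2 * (J + j) + 2)‖ := by
                  rw [hnp, norm_one]
              _ ≤ ‖(1:ℂ) - q ^ (2 * (J + j) + 2)‖ := norm_sub_norm_le _ _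
    calc ‖qfac q J‖ / 2 ^ J * (1/2) ≤ ‖qfac q J‖ * (1/2) := by
          rw [div_mul_eq_mul_div, mul_comm, mul_div_assoc]
          apply mul_le_mul_of_nonneg_left _ (by norm_num)
          exact div_le_self hqJpos.le (one_le_pow₀ (by norm_num))
      _ ≤ ‖qfac q J‖ * ‖∏ j ∈ Finset.range s, ((1:ℂ) - q ^ (2 * (J + j) + 2))‖ := by
          exact mul_le_mul_of_nonneg_left hbound hqJpos.le

/-- summand of the inner sums -/
noncomputable def usum (q : ℂ) (l m : ℕ) : ℂ :=
  (-1) ^ m * q ^ (m * m + m + 2 * m * l) / qfac q m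

lemma summable_norm_usum (hq : ‖q‖ < 1) (l : ℕ) : Summable (fun m => ‖usum q l m‖) := by
  have hr1 : (0:ℝ) < 1 - ‖q‖ := by linarith
  refine Summable.of_nonneg_of_le (fun m => norm_nonneg _) (fun m => ?_)
    (summable_pow_mul hq (C := (1 - ‖q‖)⁻¹) (by positivity))
  have hnorm : ‖usum q l m‖ = ‖q‖ ^ (m * m + m + 2 * m * l) / ‖qfac q m‖ := by
    rw [usum, norm_div, norm_mul, norm_pow, norm_pow, norm_neg, norm_one, one_pow, one_mul]
  rw [hnorm]
  have h1 : ‖q‖ ^ (m * m + m + 2 * m * l) ≤ ‖q‖ ^ (m * (m - 1)) := by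
    apply pow_le_pow_of_le_one (norm_nonneg q) hq.le
    calc m * (m - 1) ≤ m * m := Nat.mul_le_mul_left m (by omega)
      _ ≤ m * m + m + 2 * m * l := by omega
  have h2 : (1 - ‖q‖) ^ m ≤ ‖qfac q m‖ := norm_qfac_lower hq m
  calc ‖q‖ ^ (m * m + m + 2 * m * l) / ‖qfac q m‖
      ≤ ‖q‖ ^ (m * (m - 1)) / (1 - ‖q‖) ^ m := by
        apply div_le_div₀ (by positivity) h1 (by positivity) h2
    _ = ((1 - ‖q‖)⁻¹) ^ m * ‖q‖ ^ (m * (m - 1)) := by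
        rw [inv_pow]
        ring
  
lemma summable_usum (hq : ‖q‖ < 1) (l : ℕ) : Summable (usum q l) :=
  (summable_norm_usum hq l).of_norm

lemma key1 (hq : ‖q‖ < 1) (l : ℕ) :
    (∏' j : ℕ, ((1:ℂ) - q ^ (2 * (j + 1)))) = qfac q l * ∑' m, usum q l m := by
  have hx : ‖(q ^ (2 * l + 2) : ℂ)‖ < 1 := norm_q_pow_lt hq (by omega)
  have hfun : (fun j : ℕ => (1:ℂ) - q ^ (2 * (j + 1))) = (fun j => 1 - q ^ (2 * j + 2)) := by
    funext j
    ring_nf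
  have hshift : (fun j : ℕ => (1:ℂ) - q ^ (2 * (j + l) + 2))
      = (fun j => 1 - q ^ (2 * l + 2) * q ^ (2 * j)) := by
    funext j
    rw [← pow_add]
    ring_nf
  have hm2 : Multipliable (fun j : ℕ => (1:ℂ) - q ^ (2 * (j + l) + 2)) := by
    rw [hshift]
    exact euler_multipliable hq hx
  have hsplit := Multipliable.prod_mul_tprod_nat_mul' (f := fun j : ℕ => (1:ℂ) - q ^ (2 * j + 2)) (k := l) hm2
  rw [hfun, ← hsplit]
  congr 1
  rw [hshift, euler_tprod hq hx]
  apply tsum_congr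
  intro m
  show (-1) ^ m * q ^ (m * (m - 1)) * (q ^ (2 * l + 2)) ^ m / qfac q m = usum q l m
  rw [usum]
  cases m with
  | zero => simp
  | succ n =>
    rw [show n + 1 - 1 = n by omega, ← pow_mul]
    ring

lemma neg_one_pow_sq (m : ℕ) : ((-1 : ℂ)) ^ (m ^ 2) = (-1) ^ m := by
  rcases Nat.even_or_odd m with h | h
  · rw [h.neg_one_pow, Even.neg_one_pow (by rw [sq]; exact h.mul_right m)]
  · rw [h.neg_one_pow, Odd.neg_one_pow (h.pow)]

end SchurA2

open SchurA2 Finset Filter Complex Topology in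
/-- The Schur index of the `A₂` Argyres–Douglas theory,
`(q²;q²)_∞² Σ_{l₁,l₂} q^{2l₁+2l₂+2l₁l₂}/((q²;q²)_{l₁}²(q²;q²)_{l₂}²)`, equals the
specialized generating series of the four-node symmetric quiver with adjacency matrix
`[[0,1,1,0],[1,0,0,1],[1,0,1,0],[0,1,0,1]]` (summation variables `(l₁,l₂,m,n)`). -/
theorem schur_A2 (q : ℂ) (hq : ‖q‖ < 1) :
    (∏' j : ℕ, (1 - q ^ (2 * (j + 1)))) ^ 2 *
        (∑' l : ℕ × ℕ,
          q ^ (2 * l.1 + 2 * l.2 + 2 * l.1 * l.2) /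
            (qfac q l.1 ^ 2 * qfac q l.2 ^ 2)) =
      ∑' p : ℕ × ℕ × ℕ × ℕ,
        (-q) ^ (p.2.2.1 ^ 2 + p.2.2.2 ^ 2 + 2 * p.2.2.1 * p.1 + 2 * p.2.2.2 * p.2.1 +
              2 * p.1 * p.2.1) *
          q ^ (2 * p.1 + 2 * p.2.1 + p.2.2.1 + p.2.2.2) /
          (qfac q p.1 * qfac q p.2.1 * qfac q p.2.2.1 * qfac q p.2.2.2) := by
  classical
  obtain ⟨c, hc0, hc⟩ := exists_qfac_lb hq
  set t : ℕ × ℕ × ℕ × ℕ → ℂ := fun p =>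
    (-q) ^ (p.2.2.1 ^ 2 + p.2.2.2 ^ 2 + 2 * p.2.2.1 * p.1 + 2 * p.2.2.2 * p.2.1 +
          2 * p.1 * p.2.1) *
      q ^ (2 * p.1 + 2 * p.2.1 + p.2.2.1 + p.2.2.2) /
      (qfac q p.1 * qfac q p.2.1 * qfac q p.2.2.1 * qfac q p.2.2.2) with ht_def
  -- summability of t
  have hgeom : Summable (fun n : ℕ => ‖q‖ ^ n) := summable_geometric_of_lt_one (norm_nonneg q) hq
  have hgeom2 : Summable (fun n : ℕ => ‖q‖ ^ (2 * n)) := by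
    have : (fun n : ℕ => ‖q‖ ^ (2 * n)) = fun n : ℕ => (‖q‖ ^ 2) ^ n := by
      funext n; rw [← pow_mul]
    rw [this]
    exact summable_geometric_of_lt_one (by positivity)
      (pow_lt_one₀ (norm_nonneg q) hq two_ne_zero)
  have hboundsum : Summable (fun p : ℕ × ℕ × ℕ × ℕ =>
      (1 / c ^ 4) * (‖q‖ ^ (2 * p.1) * (‖q‖ ^ (2 * p.2.1) * (‖q‖ ^ p.2.2.1 * ‖q‖ ^ p.2.2.2)))) := by
    apply Summable.mul_left
    exact hgeom2.mul_of_nonneg (hgeom2.mul_of_nonneg (hgeom.mul_of_nonneg hgeom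
      (fun n => by positivity) (fun n => by positivity))
      (fun n => by positivity) (fun p => by positivity))
      (fun n => by positivity) (fun p => by positivity)
  have ht : Summable t := by
    apply Summable.of_norm_bounded hboundsum
    rintro ⟨l₁, l₂, m, n⟩
    have hd : c ^ 4 ≤ ‖qfac q l₁ * qfac q l₂ * qfac q m * qfac q n‖ := by
      rw [norm_mul, norm_mul, norm_mul]
      calc c ^ 4 = c * c * c * c := by ring
        _ ≤ ‖qfac q l₁‖ * ‖qfac q l₂‖ * ‖qfac q m‖ * ‖qfac q n‖ := by
            gcongr <;> first | exact hc0.le | exact hc _ | positivity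
    have hnum : ‖(-q) ^ (m ^ 2 + n ^ 2 + 2 * m * l₁ + 2 * n * l₂ + 2 * l₁ * l₂) *
        q ^ (2 * l₁ + 2 * l₂ + m + n)‖ ≤ ‖q‖ ^ (2 * l₁) * (‖q‖ ^ (2 * l₂) * (‖q‖ ^ m * ‖q‖ ^ n)) := by
      rw [norm_mul, norm_pow, norm_pow, norm_neg]
      calc ‖q‖ ^ (m ^ 2 + n ^ 2 + 2 * m * l₁ + 2 * n * l₂ + 2 * l₁ * l₂) *
            ‖q‖ ^ (2 * l₁ + 2 * l₂ + m + n)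
          ≤ 1 * ‖q‖ ^ (2 * l₁ + 2 * l₂ + m + n) := by
            apply mul_le_mul_of_nonneg_right (pow_le_one₀ (norm_nonneg q) hq.le) (by positivity)
        _ = ‖q‖ ^ (2 * l₁) * (‖q‖ ^ (2 * l₂) * (‖q‖ ^ m * ‖q‖ ^ n)) := by
            rw [one_mul, pow_add, pow_add, pow_add]
            ring
    show ‖(-q) ^ (m ^ 2 + n ^ 2 + 2 * m * l₁ + 2 * n * l₂ + 2 * l₁ * l₂) *
        q ^ (2 * l₁ + 2 * l₂ + m + n) / (qfac q l₁ * qfac q l₂ * qfac q m * qfac q n)‖ ≤ _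
    rw [norm_div]
    calc ‖(-q) ^ (m ^ 2 + n ^ 2 + 2 * m * l₁ + 2 * n * l₂ + 2 * l₁ * l₂) *
          q ^ (2 * l₁ + 2 * l₂ + m + n)‖ / ‖qfac q l₁ * qfac q l₂ * qfac q m * qfac q n‖
        ≤ (‖q‖ ^ (2 * l₁) * (‖q‖ ^ (2 * l₂) * (‖q‖ ^ m * ‖q‖ ^ n))) / c ^ 4 :=
          div_le_div₀ (by positivity) hnum (by positivity) hd
      _ = (1 / c ^ 4) * (‖q‖ ^ (2 * l₁) * (‖q‖ ^ (2 * l₂) * (‖q‖ ^ m * ‖q‖ ^ n))) := by ring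
  -- regroup the quadruple sum
  let e : (ℕ × ℕ) × (ℕ × ℕ) ≃ ℕ × ℕ × ℕ × ℕ :=
    ⟨fun z => (z.1.1, z.1.2, z.2.1, z.2.2), fun p => ((p.1, p.2.1), (p.2.2.1, p.2.2.2)),
      fun z => rfl, fun p => rfl⟩
  have ht' : Summable (fun z => t (e z)) := ht.comp_injective e.injective
  have hre : ∑' p, t p = ∑' z : (ℕ × ℕ) × (ℕ × ℕ), t (e z) := (e.tsum_eq t).symm
  show _ = ∑' p, t p
  rw [hre, Summable.tsum_prod' ht' (fun l => ht'.prod_factor l), ← tsum_mul_left]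
  apply tsum_congr
  rintro ⟨l₁, l₂⟩
  have hterm : ∀ w : ℕ × ℕ, t (e ((l₁, l₂), w)) =
      (q ^ (2 * l₁ + 2 * l₂ + 2 * l₁ * l₂) / (qfac q l₁ * qfac q l₂)) *
        (usum q l₁ w.1 * usum q l₂ w.2) := by
    rintro ⟨m, n⟩
    show (-q) ^ (m ^ 2 + n ^ 2 + 2 * m * l₁ + 2 * n * l₂ + 2 * l₁ * l₂) *
        q ^ (2 * l₁ + 2 * l₂ + m + n) / (qfac q l₁ * qfac q l₂ * qfac q m * qfac q n) = _
    have hsign : (-q) ^ (m ^ 2 + n ^ 2 + 2 * m * l₁ + 2 * n * l₂ + 2 * l₁ * l₂) =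
        (-1) ^ m * (-1) ^ n * q ^ (m ^ 2 + n ^ 2 + 2 * m * l₁ + 2 * n * l₂ + 2 * l₁ * l₂) := by
      rw [neg_pow]
      congr 1
      rw [show m ^ 2 + n ^ 2 + 2 * m * l₁ + 2 * n * l₂ + 2 * l₁ * l₂
          = m ^ 2 + (n ^ 2 + 2 * (m * l₁ + n * l₂ + l₁ * l₂)) by ring,
        pow_add, pow_add, pow_mul, neg_one_sq, one_pow, mul_one,
        neg_one_pow_sq m, neg_one_pow_sq n]
    have h1 := qfac_ne_zero hq l₁
    have h2 := qfac_ne_zero hq l₂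
    have h3 := qfac_ne_zero hq m
    have h4 := qfac_ne_zero hq n
    have hD1 : qfac q l₁ * qfac q l₂ * qfac q m * qfac q n ≠ 0 :=
      mul_ne_zero (mul_ne_zero (mul_ne_zero h1 h2) h3) h4
    have hD2 : qfac q l₁ * qfac q l₂ * (qfac q m * qfac q n) ≠ 0 :=
      mul_ne_zero (mul_ne_zero h1 h2) (mul_ne_zero h3 h4)
    rw [hsign, usum, usum, div_mul_div_comm, div_mul_div_comm, div_eq_div_iff hD1 hD2]
    ring
  rw [tsum_congr hterm, tsum_mul_left,
    ← tsum_mul_tsum_of_summable_norm (summable_norm_usum hq l₁) (summable_norm_usum hq l₂)]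
  have hk1 := key1 hq l₁
  have hk2 := key1 hq l₂
  have h1 := qfac_ne_zero hq l₁
  have h2 := qfac_ne_zero hq l₂
  rw [sq]
  nth_rewrite 1 [hk1]
  nth_rewrite 1 [hk2]
  field_simp
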